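/- Let H be a Hopf algebra over a field K and λ ∈ H* a left integral on H. Then for all x, y ∈ H: x₁ λ(x₂ S(y)) = λ(x S(y₁)) y₂. -/

import Mathlib

open TensorProduct Coalgebra HopfAlgebra

namespace LeftIntAux

variable {K : Type*} {H : Type*} [CommSemiring K] [Semiring H] [Bialgebra K H]

section Conv
variable {B : Type*} [Semiring B] [Algebra K B]

/-- The convolution product on `Hom(H, B)`. -/
noncomputable def conv (f g : H →ₗ[K] B) : H →ₗ[K] B :=
  LinearMap.mul' K B ∘ₗ TensorProduct.map f g ∘ₗ Coalgebra.comul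

lemma conv_repr (f g : H →ₗ[K] B) {a : H} {ι : Type*} (r : Repr K a ι) :
    conv f g a = ∑ i ∈ r.index, f (r.left i) * g (r.right i) := by
  simp [conv, ← r.eq, map_sum]

/-- The unit for the convolution product. -/
noncomputable def convUnit : H →ₗ[K] B := Algebra.linearMap K B ∘ₗ Coalgebra.counit

lemma convUnit_apply (a : H) :
    (convUnit (K := K) (H := H) (B := B)) a = counit (R := K) a • (1 : B) := by
  simp [convUnit, Algebra.smul_def]

lemma sum_counit_smul_right {a : H} {ι : Type*} (r : Repr K a ι) :
    ∑ i ∈ r.index, counit (R := K) (r.left i) • r.right i = a := by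
  have h := congrArg (TensorProduct.lid K H) (sum_counit_tmul_eq r)
  rw [map_sum] at h
  simp only [lid_tmul] at h
  simpa using h

lemma sum_counit_smul_left {a : H} {ι : Type*} (r : Repr K a ι) :
    ∑ i ∈ r.index, counit (R := K) (r.right i) • r.left i = a := by
  have h := congrArg (TensorProduct.rid K H) (sum_tmul_counit_eq r)
  rw [map_sum] at h
  simp only [rid_tmul] at h
  simpa using h

lemma conv_unit_left (f : H →ₗ[K] B) : conv convUnit f = f := by
  ext a
  rw [conv_repr _ _ (ℛ K a)]
  calc ∑ i ∈ (ℛ K a).index, convUnit ((ℛ K a).left i) * f ((ℛ K a).right i)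
      = ∑ i ∈ (ℛ K a).index, f (counit (R := K) ((ℛ K a).left i) • (ℛ K a).right i) := by
        refine Finset.sum_congr rfl fun i _ => ?_
        rw [convUnit_apply, smul_mul_assoc, one_mul, map_smul]
    _ = f a := by rw [← map_sum, sum_counit_smul_right]

lemma conv_unit_right (f : H →ₗ[K] B) : conv f convUnit = f := by
  ext a
  rw [conv_repr _ _ (ℛ K a)]
  calc ∑ i ∈ (ℛ K a).index, f ((ℛ K a).left i) * convUnit ((ℛ K a).right i)
      = ∑ i ∈ (ℛ K a).index, f (counit (R := K) ((ℛ K a).right i) • (ℛ K a).left i) := by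
        refine Finset.sum_congr rfl fun i _ => ?_
        rw [convUnit_apply, mul_smul_comm, mul_one, map_smul]
    _ = f a := by rw [← map_sum, sum_counit_smul_left]

lemma conv_assoc (f g h : H →ₗ[K] B) : conv (conv f g) h = conv f (conv g h) := by
  ext a
  set r := ℛ K a
  have key := sum_tmul_tmul_eq r (fun i => ℛ K (r.left i)) (fun i => ℛ K (r.right i))
  have key2 := congrArg
    (LinearMap.mul' K B ∘ₗ TensorProduct.map f (LinearMap.mul' K B ∘ₗ TensorProduct.map g h)) key
  simp only [map_sum, LinearMap.comp_apply, TensorProduct.map_tmul, LinearMap.mul'_apply] at key2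
  rw [conv_repr (conv f g) h r, conv_repr f (conv g h) r]
  calc ∑ i ∈ r.index, conv f g (r.left i) * h (r.right i)
      = ∑ i ∈ r.index, ∑ j ∈ (ℛ K (r.left i)).index,
          f ((ℛ K (r.left i)).left j) * (g ((ℛ K (r.left i)).right j) * h (r.right i)) := by
        refine Finset.sum_congr rfl fun i _ => ?_
        rw [conv_repr f g (ℛ K (r.left i)), Finset.sum_mul]
        exact Finset.sum_congr rfl fun j _ => mul_assoc _ _ _
    _ = ∑ i ∈ r.index, ∑ j ∈ (ℛ K (r.right i)).index,
          f (r.left i) * (g ((ℛ K (r.right i)).left j) * h ((ℛ K (r.right i)).right j)) := key2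
    _ = ∑ i ∈ r.index, f (r.left i) * conv g h (r.right i) := by
        refine Finset.sum_congr rfl fun i _ => ?_
        rw [conv_repr g h (ℛ K (r.right i)), Finset.mul_sum]

end Conv

end LeftIntAux

namespace LeftIntAux

variable {K : Type*} {H : Type*} [CommSemiring K] [Semiring H] [HopfAlgebra K H]

/-- `a ↦ ∑ S(a₂) ⊗ S(a₁)`, the candidate for `Δ ∘ S`. -/
noncomputable def antiG : H →ₗ[K] H ⊗[K] H :=
  (TensorProduct.comm K H H).toLinearMap ∘ₗ
    TensorProduct.map (antipode (R := K)) (antipode (R := K)) ∘ₗ Coalgebra.comul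

lemma antiG_repr {a : H} {ι : Type*} (r : Repr K a ι) :
    antiG (K := K) a = ∑ i ∈ r.index,
      antipode (R := K) (r.right i) ⊗ₜ[K] antipode (R := K) (r.left i) := by
  simp [antiG, ← r.eq, map_sum]

lemma lemmaA :
    conv (Coalgebra.comul ∘ₗ antipode (R := K) (A := H)) Coalgebra.comul = convUnit := by
  ext a
  rw [conv_repr _ _ (ℛ K a)]
  calc ∑ i ∈ (ℛ K a).index,
        (Coalgebra.comul ∘ₗ antipode (R := K)) ((ℛ K a).left i) *
          Coalgebra.comul ((ℛ K a).right i)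
      = ∑ i ∈ (ℛ K a).index,
          Coalgebra.comul (R := K) (antipode (R := K) ((ℛ K a).left i) * (ℛ K a).right i) := by
        refine Finset.sum_congr rfl fun i _ => ?_
        rw [LinearMap.comp_apply, ← Bialgebra.comul_mul]
    _ = Coalgebra.comul (R := K)
          (∑ i ∈ (ℛ K a).index, antipode (R := K) ((ℛ K a).left i) * (ℛ K a).right i) := by
        rw [map_sum]
    _ = convUnit a := by
        rw [sum_antipode_mul_eq_algebraMap_counit (ℛ K a), Bialgebra.comul_algebraMap]
        rfl

lemma lemmaB : conv (Coalgebra.comul (R := K) (A := H)) antiG = convUnit := by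
  ext a
  let r := ℛ K a
  let rL : (i : r.ι) → Repr K (r.left i) (H × H) := fun i => ℛ K (r.left i)
  let rR : (i : r.ι) → Repr K (r.right i) (H × H) := fun i => ℛ K (r.right i)
  let rP : (i : r.ι) → (k : (rL i).ι) → Repr K ((rL i).left k) (H × H) :=
    fun i k => ℛ K ((rL i).left k)
  let rQ : (i : r.ι) → (k : (rL i).ι) → Repr K ((rL i).right k) (H × H) :=
    fun i k => ℛ K ((rL i).right k)
  -- Φ : H ⊗ (H ⊗ H) → H ⊗ H,  x ⊗ (y ⊗ z) ↦ Δ(x) * (S z ⊗ S y)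
  let Φ : H ⊗[K] (H ⊗[K] H) →ₗ[K] H ⊗[K] H :=
    LinearMap.mul' K (H ⊗[K] H) ∘ₗ
      TensorProduct.map (Coalgebra.comul)
        ((TensorProduct.comm K H H).toLinearMap ∘ₗ
          TensorProduct.map (antipode (R := K)) (antipode (R := K)))
  have Φ_tmul : ∀ (x y z : H), Φ (x ⊗ₜ (y ⊗ₜ z)) =
      Coalgebra.comul (R := K) x * (antipode (R := K) z ⊗ₜ antipode (R := K) y) := by
    intro x y z
    simp [Φ]
  -- N c : H ⊗ (H ⊗ H) → H ⊗ H,  u ⊗ (v ⊗ w) ↦ (u * S c) ⊗ (v * S w)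
  let N : H → (H ⊗[K] (H ⊗[K] H) →ₗ[K] H ⊗[K] H) := fun c =>
    TensorProduct.map (LinearMap.mulRight K (antipode (R := K) c))
      (LinearMap.mul' K H ∘ₗ LinearMap.lTensor H (antipode (R := K)))
  have N_tmul : ∀ (c u v w : H), N c (u ⊗ₜ (v ⊗ₜ w)) =
      (u * antipode (R := K) c) ⊗ₜ (v * antipode (R := K) w) := by
    intro c u v w
    simp [N]
  calc conv (Coalgebra.comul (R := K) (A := H)) antiG a
      = ∑ i ∈ r.index, Coalgebra.comul (R := K) (r.left i) * antiG (K := K) (r.right i) :=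
        conv_repr _ _ r
    _ = Φ (∑ i ∈ r.index, ∑ j ∈ (rR i).index,
          r.left i ⊗ₜ[K] ((rR i).left j ⊗ₜ[K] (rR i).right j)) := by
        rw [map_sum]
        refine Finset.sum_congr rfl fun i _ => ?_
        rw [antiG_repr (rR i), map_sum, Finset.mul_sum]
        exact Finset.sum_congr rfl fun j _ => (Φ_tmul _ _ _).symm
    _ = Φ (∑ i ∈ r.index, ∑ k ∈ (rL i).index,
          (rL i).left k ⊗ₜ[K] ((rL i).right k ⊗ₜ[K] r.right i)) := by
        rw [sum_tmul_tmul_eq r rL rR]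
    _ = ∑ i ∈ r.index, ∑ k ∈ (rL i).index,
          Coalgebra.comul (R := K) ((rL i).left k) *
            (antipode (R := K) (r.right i) ⊗ₜ[K] antipode (R := K) ((rL i).right k)) := by
        rw [map_sum]
        exact Finset.sum_congr rfl fun i _ => by
          rw [map_sum]
          exact Finset.sum_congr rfl fun k _ => Φ_tmul _ _ _
    _ = ∑ i ∈ r.index, N (r.right i) (∑ k ∈ (rL i).index, ∑ t ∈ (rP i k).index,
          (rP i k).left t ⊗ₜ[K] ((rP i k).right t ⊗ₜ[K] (rL i).right k)) := by
        refine Finset.sum_congr rfl fun i _ => ?_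
        rw [map_sum]
        refine Finset.sum_congr rfl fun k _ => ?_
        rw [← (rP i k).eq, Finset.sum_mul, map_sum]
        refine Finset.sum_congr rfl fun t _ => ?_
        rw [N_tmul, Algebra.TensorProduct.tmul_mul_tmul]
    _ = ∑ i ∈ r.index, N (r.right i) (∑ k ∈ (rL i).index, ∑ s ∈ (rQ i k).index,
          (rL i).left k ⊗ₜ[K] ((rQ i k).left s ⊗ₜ[K] (rQ i k).right s)) := by
        refine Finset.sum_congr rfl fun i _ => ?_
        rw [sum_tmul_tmul_eq (rL i) (rP i) (rQ i)]
    _ = ∑ i ∈ r.index, ∑ k ∈ (rL i).index,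
          counit (R := K) ((rL i).right k) •
            (((rL i).left k * antipode (R := K) (r.right i)) ⊗ₜ[K] (1 : H)) := by
        refine Finset.sum_congr rfl fun i _ => ?_
        rw [map_sum]
        refine Finset.sum_congr rfl fun k _ => ?_
        rw [map_sum]
        calc ∑ s ∈ (rQ i k).index, N (r.right i)
              ((rL i).left k ⊗ₜ[K] ((rQ i k).left s ⊗ₜ[K] (rQ i k).right s))
            = ((rL i).left k * antipode (R := K) (r.right i)) ⊗ₜ[K]
                (∑ s ∈ (rQ i k).index, (rQ i k).left s * antipode (R := K) ((rQ i k).right s)) := by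
              rw [tmul_sum]
              exact Finset.sum_congr rfl fun s _ => N_tmul _ _ _ _
          _ = _ := by
              rw [sum_mul_antipode_eq_smul (rQ i k), tmul_smul]
    _ = ∑ i ∈ r.index,
          ((∑ k ∈ (rL i).index, counit (R := K) ((rL i).right k) • (rL i).left k)
            * antipode (R := K) (r.right i)) ⊗ₜ[K] (1 : H) := by
        refine Finset.sum_congr rfl fun i _ => ?_
        rw [Finset.sum_mul, sum_tmul]
        exact Finset.sum_congr rfl fun k _ => by
          rw [smul_mul_assoc, smul_tmul']
    _ = (∑ i ∈ r.index, r.left i * antipode (R := K) (r.right i)) ⊗ₜ[K] (1 : H) := by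
        rw [sum_tmul]
        exact Finset.sum_congr rfl fun i _ => by rw [sum_counit_smul_left (rL i)]
    _ = convUnit a := by
        rw [sum_mul_antipode_eq_algebraMap_counit r, convUnit]
        simp [Algebra.TensorProduct.algebraMap_apply]

/-- The antipode is an anti-coalgebra morphism: `Δ(S a) = ∑ S(a₂) ⊗ S(a₁)`. -/
lemma comul_antipode :
    Coalgebra.comul ∘ₗ antipode (R := K) (A := H) = antiG := by
  calc Coalgebra.comul ∘ₗ antipode (R := K) (A := H)
      = conv (Coalgebra.comul ∘ₗ antipode (R := K) (A := H)) convUnit :=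
        (conv_unit_right _).symm
    _ = conv (Coalgebra.comul ∘ₗ antipode (R := K) (A := H))
          (conv (Coalgebra.comul (R := K) (A := H)) antiG) := by rw [lemmaB]
    _ = conv (conv (Coalgebra.comul ∘ₗ antipode (R := K) (A := H))
          (Coalgebra.comul (R := K) (A := H))) antiG := (conv_assoc _ _ _).symm
    _ = conv convUnit antiG := by rw [lemmaA]
    _ = antiG := conv_unit_left _

lemma comul_antipode_repr {a : H} {ι : Type*} (r : Repr K a ι) :
    Coalgebra.comul (R := K) (antipode (R := K) a) = ∑ i ∈ r.index,
      antipode (R := K) (r.right i) ⊗ₜ[K] antipode (R := K) (r.left i) := by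
  have := LinearMap.congr_fun (comul_antipode (K := K) (H := H)) a
  rw [LinearMap.comp_apply] at this
  rw [this, antiG_repr r]

end LeftIntAux

open LeftIntAux

/-- If `λ ∈ H*` is a left integral on a Hopf algebra `H` over a field `K`,
then `x₁ λ(x₂ S(y)) = λ(x S(y₁)) y₂` for all `x, y ∈ H`. -/
theorem left_dual_integral_identity
    {K : Type*} {H : Type*} [Field K] [Ring H] [HopfAlgebra K H]
    (lam : H →ₗ[K] K)
    (hlam : ∀ h : H,
      (TensorProduct.rid K H) ((LinearMap.lTensor H lam) (Coalgebra.comul (R := K) h)) =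
        lam h • (1 : H)) :
    ∀ x y : H,
      -- `x₁ λ(x₂ S(y))`
      (TensorProduct.rid K H)
          ((LinearMap.lTensor H
              (lam ∘ₗ LinearMap.mulRight K (HopfAlgebra.antipode (R := K) y)))
            (Coalgebra.comul (R := K) x)) =
        -- `λ(x S(y₁)) y₂`
        (TensorProduct.lid K H)
          ((LinearMap.rTensor H
              (lam ∘ₗ LinearMap.mulLeft K x ∘ₗ HopfAlgebra.antipode (R := K)))
            (Coalgebra.comul (R := K) y)) := by
  intro x y
  set S : H →ₗ[K] H := antipode (R := K) with hS
  let rx := ℛ K x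
  let ry := ℛ K y
  let rYL : (j : ry.ι) → Repr K (ry.left j) (H × H) := fun j => ℛ K (ry.left j)
  let rYR : (j : ry.ι) → Repr K (ry.right j) (H × H) := fun j => ℛ K (ry.right j)
  -- expand the LHS
  have hLHS : (TensorProduct.rid K H)
      ((LinearMap.lTensor H (lam ∘ₗ LinearMap.mulRight K (S y))) (Coalgebra.comul (R := K) x)) =
      ∑ i ∈ rx.index, lam (rx.right i * S y) • rx.left i := by
    rw [← rx.eq, map_sum, map_sum]
    exact Finset.sum_congr rfl fun i _ => by
      simp [LinearMap.mulRight_apply]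
  -- expand the RHS
  have hRHS : (TensorProduct.lid K H)
      ((LinearMap.rTensor H (lam ∘ₗ LinearMap.mulLeft K x ∘ₗ S)) (Coalgebra.comul (R := K) y)) =
      ∑ j ∈ ry.index, lam (x * S (ry.left j)) • ry.right j := by
    rw [← ry.eq, map_sum, map_sum]
    exact Finset.sum_congr rfl fun j _ => by
      simp [LinearMap.mulLeft_apply]
  rw [hLHS, hRHS]
  symm
  -- Q i : H ⊗ (H ⊗ H) → H,  u ⊗ (v ⊗ w) ↦ λ(x₂ⁱ S(u)) • (x₁ⁱ * (S(v) * w))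
  let Q : rx.ι → (H ⊗[K] (H ⊗[K] H) →ₗ[K] H) := fun i =>
    (TensorProduct.lid K H).toLinearMap ∘ₗ
      TensorProduct.map (lam ∘ₗ LinearMap.mulLeft K (rx.right i) ∘ₗ S)
        (LinearMap.mulLeft K (rx.left i) ∘ₗ LinearMap.mul' K H ∘ₗ LinearMap.rTensor H S)
  have Q_tmul : ∀ (i : rx.ι) (u v w : H), Q i (u ⊗ₜ (v ⊗ₜ w)) =
      lam (rx.right i * S u) • (rx.left i * (S v * w)) := by
    intro i u v w
    simp [Q]
  -- main computation, starting from the RHS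
  calc ∑ j ∈ ry.index, lam (x * S (ry.left j)) • ry.right j
      = ∑ j ∈ ry.index,
          ((TensorProduct.rid K H) ((LinearMap.lTensor H lam)
            (Coalgebra.comul (R := K) (x * S (ry.left j))))) * ry.right j := by
        refine Finset.sum_congr rfl fun j _ => ?_
        rw [hlam (x * S (ry.left j)), smul_mul_assoc, one_mul]
    _ = ∑ j ∈ ry.index, ∑ i ∈ rx.index, ∑ k ∈ (rYL j).index,
          lam (rx.right i * S ((rYL j).left k)) •
            (rx.left i * (S ((rYL j).right k) * ry.right j)) := by
        refine Finset.sum_congr rfl fun j _ => ?_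
        rw [Bialgebra.comul_mul, comul_antipode_repr (rYL j), ← rx.eq, Finset.sum_mul]
        rw [map_sum, map_sum, Finset.sum_mul]
        refine Finset.sum_congr rfl fun i _ => ?_
        rw [Finset.mul_sum, map_sum, map_sum, Finset.sum_mul]
        refine Finset.sum_congr rfl fun k _ => ?_
        rw [Algebra.TensorProduct.tmul_mul_tmul]
        simp [smul_mul_assoc, mul_assoc, hS]
    _ = ∑ i ∈ rx.index, Q i (∑ j ∈ ry.index, ∑ k ∈ (rYL j).index,
          (rYL j).left k ⊗ₜ[K] ((rYL j).right k ⊗ₜ[K] ry.right j)) := by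
        rw [Finset.sum_comm]
        refine Finset.sum_congr rfl fun i _ => ?_
        rw [map_sum]
        refine Finset.sum_congr rfl fun j _ => ?_
        rw [map_sum]
        exact Finset.sum_congr rfl fun k _ => (Q_tmul i _ _ _).symm
    _ = ∑ i ∈ rx.index, Q i (∑ j ∈ ry.index, ∑ s ∈ (rYR j).index,
          ry.left j ⊗ₜ[K] ((rYR j).left s ⊗ₜ[K] (rYR j).right s)) := by
        refine Finset.sum_congr rfl fun i _ => ?_
        rw [sum_tmul_tmul_eq ry rYL rYR]
    _ = ∑ i ∈ rx.index, ∑ j ∈ ry.index,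
          counit (R := K) (ry.right j) • (lam (rx.right i * S (ry.left j)) • rx.left i) := by
        refine Finset.sum_congr rfl fun i _ => ?_
        rw [map_sum]
        refine Finset.sum_congr rfl fun j _ => ?_
        rw [map_sum]
        calc ∑ s ∈ (rYR j).index,
              Q i (ry.left j ⊗ₜ[K] ((rYR j).left s ⊗ₜ[K] (rYR j).right s))
            = lam (rx.right i * S (ry.left j)) •
                (rx.left i * ∑ s ∈ (rYR j).index,
                  S ((rYR j).left s) * (rYR j).right s) := by
              rw [Finset.mul_sum, Finset.smul_sum]
              exact Finset.sum_congr rfl fun s _ => Q_tmul i _ _ _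
          _ = _ := by
              rw [sum_antipode_mul_eq_smul (rYR j)]
              rw [mul_smul_comm, mul_one, smul_comm]
    _ = ∑ i ∈ rx.index, lam (rx.right i * S y) • rx.left i := by
        refine Finset.sum_congr rfl fun i _ => ?_
        have lin : ∀ c : K, ∀ t : H,
            c • (lam (rx.right i * S t) • rx.left i)
              = lam (rx.right i * S (c • t)) • rx.left i := by
          intro c t
          rw [map_smul, mul_smul_comm, map_smul, smul_assoc]
        calc ∑ j ∈ ry.index,
              counit (R := K) (ry.right j) • (lam (rx.right i * S (ry.left j)) • rx.left i)
            = ∑ j ∈ ry.index,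
                lam (rx.right i * S (counit (R := K) (ry.right j) • ry.left j)) • rx.left i := by
              exact Finset.sum_congr rfl fun j _ => lin _ _
          _ = lam (rx.right i * S y) • rx.left i := by
              have key : ∑ j ∈ ry.index,
                  lam (rx.right i * S (counit (R := K) (ry.right j) • ry.left j))
                    = lam (rx.right i * S y) := by
                have h := congrArg (lam ∘ₗ LinearMap.mulLeft K (rx.right i) ∘ₗ S)
                  (sum_counit_smul_left ry)
                simpa [map_sum] using h
              rw [← Finset.sum_smul, key]
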